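/- Let p be a prime and D̄ the image of the diagonal torus of SL(p,ℂ) in PSL(p,ℂ), regarded as a module over the cyclic group ⟨M̄_c⟩ ≅ ℤ/p acting by conjugation. Then the trace map T : D̄ → D̄, d̄ ↦ d̄·(M̄_c · d̄)⁻¹ is surjective, and consequently H¹(⟨M̄_c⟩, D̄) is trivial. -/

import Mathlib

open Matrix

/-- `PSL(p, ℂ)` as the quotient of `SL(p, ℂ)` by its center. -/
abbrev PSL (p : ℕ) [Fact p.Prime] : Type :=
  Matrix.SpecialLinearGroup (ZMod p) ℂ ⧸ Subgroup.center (Matrix.SpecialLinearGroup (ZMod p) ℂ)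

/-- The natural projection `π : SL(p,ℂ) → PSL(p,ℂ)`. -/
abbrev projPSL (p : ℕ) [Fact p.Prime] :
    Matrix.SpecialLinearGroup (ZMod p) ℂ →* PSL p :=
  QuotientGroup.mk' _

/-- `D̄`, the image in `PSL(p,ℂ)` of the subgroup of diagonal matrices of `SL(p,ℂ)`. -/
noncomputable def DbarSub (p : ℕ) [Fact p.Prime] : Subgroup (PSL p) :=
  Subgroup.map (projPSL p)
    (Subgroup.closure {x : Matrix.SpecialLinearGroup (ZMod p) ℂ |
      (x : Matrix (ZMod p) (ZMod p) ℂ).IsDiag})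

/-- Every element of the closure of the diagonal matrices is diagonal. -/
lemma isDiag_of_mem_closure (p : ℕ) [Fact p.Prime]
    {x : Matrix.SpecialLinearGroup (ZMod p) ℂ}
    (hx : x ∈ Subgroup.closure {x : Matrix.SpecialLinearGroup (ZMod p) ℂ |
      (x : Matrix (ZMod p) (ZMod p) ℂ).IsDiag}) :
    (x : Matrix (ZMod p) (ZMod p) ℂ).IsDiag := by
  induction hx using Subgroup.closure_induction with
  | mem x hx => exact hx
  | one => simp only [Matrix.SpecialLinearGroup.coe_one]; exact Matrix.isDiag_one
  | mul x y hx hy ihx ihy =>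
      rw [Matrix.SpecialLinearGroup.coe_mul, ← ihx.diagonal_diag, ← ihy.diagonal_diag,
        Matrix.diagonal_mul_diagonal]
      exact Matrix.isDiag_diagonal _
  | inv x hx ih =>
      rw [Matrix.SpecialLinearGroup.coe_inv, ← ih.diagonal_diag, Matrix.adjugate_diagonal]
      exact Matrix.isDiag_diagonal _

/-- The trace map is surjective on `D̄`. -/
lemma trace_surj (p : ℕ) [Fact p.Prime]
    (Mm : Matrix.SpecialLinearGroup (ZMod p) ℂ)
    (hM : ∃ c : ℂ, (Mm : Matrix (ZMod p) (ZMod p) ℂ) =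
      c • Matrix.of fun i j : ZMod p => if i = j + 1 then (1 : ℂ) else 0) :
    ∀ c ∈ DbarSub p, ∃ b ∈ DbarSub p,
        b * (projPSL p Mm * b * (projPSL p Mm)⁻¹)⁻¹ = c := by
  haveI : NeZero p := ⟨(Fact.out : p.Prime).ne_zero⟩
  have hp0 : p ≠ 0 := (Fact.out : p.Prime).ne_zero
  intro cb hcb
  obtain ⟨x, hx, rfl⟩ := hcb
  have hxd := isDiag_of_mem_closure p hx
  set c : ZMod p → ℂ := (x : Matrix (ZMod p) (ZMod p) ℂ).diag with hc
  have hX : (x : Matrix (ZMod p) (ZMod p) ℂ) = Matrix.diagonal c := hxd.diagonal_diag.symm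
  have hdet : ∏ i : ZMod p, c i = 1 := by
    have := x.property
    rwa [hX, Matrix.det_diagonal] at this
  have hc0 : ∀ i, c i ≠ 0 := by
    intro i h0
    rw [Finset.prod_eq_zero (Finset.mem_univ i) h0] at hdet
    exact zero_ne_one hdet
  -- product over `range p` equals product over `ZMod p`
  have hbijcast : Function.Bijective (fun k : Fin p => ((k : ℕ) : ZMod p)) := by
    rw [Fintype.bijective_iff_injective_and_card]
    refine ⟨fun k l hkl => ?_, by simp [ZMod.card]⟩
    have hkl' : ((k : ℕ) : ZMod p) = ((l : ℕ) : ZMod p) := hkl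
    have : ((k : ℕ) : ZMod p).val = ((l : ℕ) : ZMod p).val := by rw [hkl']
    rwa [ZMod.val_natCast_of_lt k.isLt, ZMod.val_natCast_of_lt l.isLt, ← Fin.ext_iff] at this
  have hrange : ∏ k ∈ Finset.range p, c ((k : ℕ) : ZMod p) = 1 := by
    rw [← Fin.prod_univ_eq_prod_range (fun k => c ((k : ℕ) : ZMod p)) p]
    rw [Fintype.prod_bijective _ hbijcast _ c (fun k => rfl)]
    exact hdet
  -- construct `b`
  set A : ℂ := ∏ i : ZMod p, ∏ k ∈ Finset.range i.val, c ((k + 1 : ℕ) : ZMod p) with hAdef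
  have hA : A ≠ 0 := by
    refine Finset.prod_ne_zero_iff.2 fun i _ => Finset.prod_ne_zero_iff.2 fun k _ => hc0 _
  set t : ℂ := (A⁻¹) ^ ((p : ℂ)⁻¹) with ht
  have htp : t ^ p = A⁻¹ := Complex.cpow_nat_inv_pow _ hp0
  set b : ZMod p → ℂ := fun i => t * ∏ k ∈ Finset.range i.val, c ((k + 1 : ℕ) : ZMod p) with hb
  have hbdet : (Matrix.diagonal b).det = 1 := by
    rw [Matrix.det_diagonal, hb]
    simp only
    rw [Finset.prod_mul_distrib, Finset.prod_const, Finset.card_univ, ZMod.card, htp, ← hAdef,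
      inv_mul_cancel₀ hA]
  -- key recursion
  have hrec : ∀ j : ZMod p, b (j + 1) = c (j + 1) * b j := by
    intro j
    have e1 : ((j.val + 1 : ℕ) : ZMod p) = j + 1 := by
      push_cast
      rw [ZMod.natCast_rightInverse j]
    by_cases hj : j.val + 1 < p
    · have e2 : (j + 1).val = j.val + 1 := by
        rw [← e1, ZMod.val_natCast_of_lt hj]
      simp only [hb]
      rw [e2, Finset.prod_range_succ, e1]
      ring
    · -- wrap-around: j.val + 1 = p
      have hjp : j.val + 1 = p := le_antisymm (Nat.succ_le_of_lt (ZMod.val_lt j)) (not_lt.1 hj)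
      have hj1 : j + 1 = 0 := by rw [← e1, hjp, ZMod.natCast_self]
      have hkey : c 0 * ∏ k ∈ Finset.range j.val, c ((k + 1 : ℕ) : ZMod p) = 1 := by
        have hr : Finset.range p = Finset.range (j.val + 1) := by rw [hjp]
        have := hrange
        rw [hr, Finset.prod_range_succ', Nat.cast_zero] at this
        rw [mul_comm]
        exact this
      simp only [hb, hj1, ZMod.val_zero, Finset.range_zero, Finset.prod_empty, mul_one]
      calc t = t * (c 0 * ∏ k ∈ Finset.range j.val, c ((k + 1 : ℕ) : ZMod p)) := by
              rw [hkey, mul_one]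
        _ = c 0 * (t * ∏ k ∈ Finset.range j.val, c ((k + 1 : ℕ) : ZMod p)) := by ring
  -- the diagonal SL element
  set b' : Matrix.SpecialLinearGroup (ZMod p) ℂ := ⟨Matrix.diagonal b, hbdet⟩ with hb'
  obtain ⟨c₀, hMc⟩ := hM
  set P : Matrix (ZMod p) (ZMod p) ℂ :=
    Matrix.of fun i j : ZMod p => if i = j + 1 then (1 : ℂ) else 0 with hP
  have hBP : Matrix.diagonal b * P = Matrix.diagonal c * P * Matrix.diagonal b := by
    ext i j
    rw [Matrix.diagonal_mul, Matrix.mul_diagonal, Matrix.diagonal_mul]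
    simp only [hP, Matrix.of_apply]
    split_ifs with h
    · rw [h, hrec j]; ring
    · ring
  have hmat : (Matrix.diagonal b) * (Mm : Matrix (ZMod p) (ZMod p) ℂ)
      = (x : Matrix (ZMod p) (ZMod p) ℂ) * (Mm : Matrix (ZMod p) (ZMod p) ℂ)
        * Matrix.diagonal b := by
    rw [hX, hMc]
    simp only [mul_smul_comm, smul_mul_assoc, hBP]
  have hSL : b' * Mm = x * Mm * b' := by
    apply Subtype.ext
    simpa [Matrix.SpecialLinearGroup.coe_mul] using hmat
  have hSL2 : b' * (Mm * b' * Mm⁻¹)⁻¹ = x := by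
    calc b' * (Mm * b' * Mm⁻¹)⁻¹ = (b' * Mm) * b'⁻¹ * Mm⁻¹ := by group
      _ = (x * Mm * b') * b'⁻¹ * Mm⁻¹ := by rw [hSL]
      _ = x := by group
  refine ⟨projPSL p b', ⟨b', Subgroup.subset_closure (Matrix.isDiag_diagonal b), rfl⟩, ?_⟩
  have := congrArg (projPSL p) hSL2
  simp only [_root_.map_mul, _root_.map_inv] at this
  exact this

/-- Let `p` be prime and `D̄ ≤ PSL(p,ℂ)` the image of the diagonal torus,
a module over `⟨M̄_c⟩ ≅ ℤ/p` acting by conjugation.  Then the trace map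
`T : d̄ ↦ d̄·(M̄_c·d̄)⁻¹` is surjective on `D̄`, and consequently `H¹(⟨M̄_c⟩, D̄)` is trivial:
every (multiplicative) 1-cocycle `⟨M̄_c⟩ → D̄` is a 1-coboundary. -/
theorem trace_surjective_and_H1_trivial (p : ℕ) [Fact p.Prime]
    (ξ : ℂ) (hξ : IsPrimitiveRoot ξ p)
    (Mm : Matrix.SpecialLinearGroup (ZMod p) ℂ)
    (hM : ∃ c : ℂ, (Mm : Matrix (ZMod p) (ZMod p) ℂ) =
      c • Matrix.of fun i j : ZMod p => if i = j + 1 then (1 : ℂ) else 0) :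
    (∀ c ∈ DbarSub p, ∃ b ∈ DbarSub p,
        b * (projPSL p Mm * b * (projPSL p Mm)⁻¹)⁻¹ = c) ∧
    (∀ z : ↥(Subgroup.zpowers (projPSL p Mm)) → PSL p,
        (∀ x, z x ∈ DbarSub p) →
        (∀ x y, z (x * y) = z x * ((x : PSL p) * z y * (x : PSL p)⁻¹)) →
        ∃ b ∈ DbarSub p, ∀ x, z x = b * ((x : PSL p) * b * (x : PSL p)⁻¹)⁻¹) := by
  refine ⟨trace_surj p Mm hM, ?_⟩
  intro z hzD hcoc
  set g' : ↥(Subgroup.zpowers (projPSL p Mm)) :=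
    ⟨projPSL p Mm, Subgroup.mem_zpowers _⟩ with hg'
  have hg'c : (g' : PSL p) = projPSL p Mm := rfl
  obtain ⟨b, hbD, hbT⟩ := trace_surj p Mm hM (z g') (hzD g')
  refine ⟨b, hbD, ?_⟩
  set w : ↥(Subgroup.zpowers (projPSL p Mm)) → PSL p :=
    fun x => b * ((x : PSL p) * b * (x : PSL p)⁻¹)⁻¹ with hw
  have hwcoc : ∀ x y, w (x * y) = w x * ((x : PSL p) * w y * (x : PSL p)⁻¹) := by
    intro x y
    simp only [hw, Subgroup.coe_mul]
    group
  have hz1 : z 1 = 1 := by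
    have h := hcoc 1 1
    simp only [mul_one, OneMemClass.coe_one, one_mul, inv_one] at h
    have := mul_left_cancel (a := z 1) (show z 1 * 1 = z 1 * z 1 by rw [mul_one]; exact h)
    exact this.symm
  have hw1 : w 1 = 1 := by simp [hw]
  have hzg : z g' = w g' := by
    simp only [hw]
    exact hbT.symm
  have hinv : ∀ (v : ↥(Subgroup.zpowers (projPSL p Mm)) → PSL p),
      (∀ x y, v (x * y) = v x * ((x : PSL p) * v y * (x : PSL p)⁻¹)) → v 1 = 1 →
      ∀ x, v x⁻¹ = (x : PSL p)⁻¹ * (v x)⁻¹ * (x : PSL p) := by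
    intro v hv hv1 x
    have h := hv x⁻¹ x
    rw [inv_mul_cancel, hv1] at h
    have hx : ((x⁻¹ : ↥(Subgroup.zpowers (projPSL p Mm))) : PSL p) = (x : PSL p)⁻¹ := rfl
    rw [hx] at h
    have h3 := eq_inv_of_mul_eq_one_left h.symm
    rw [h3]
    group
  have hallZ : ∀ n : ℤ, z (g' ^ n) = w (g' ^ n) := by
    intro n
    induction n using Int.induction_on with
    | zero =>
        show z (g' ^ (0 : ℤ)) = w (g' ^ (0 : ℤ))
        rw [zpow_zero]
        exact hz1.trans hw1.symm
    | succ n ih =>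
        have e : g' ^ ((n : ℤ) + 1) = g' ^ (n : ℤ) * g' := _root_.zpow_add_one g' n
        rw [e, hcoc, hwcoc, ih, hzg]
    | pred n ih =>
        have e : g' ^ (-(n : ℤ) - 1) = g' ^ (-(n : ℤ)) * g'⁻¹ := _root_.zpow_sub_one g' (-n)
        have hzinv := hinv z hcoc hz1 g'
        have hwinv := hinv w hwcoc hw1 g'
        rw [e, hcoc, hwcoc, ih, hzinv, hwinv, hzg]
  intro x
  obtain ⟨n, hn⟩ := x.property
  have hx : x = g' ^ n := by
    apply Subtype.ext
    rw [SubgroupClass.coe_zpow, hg'c]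
    exact hn.symm
  have hfin := hallZ n
  rw [← hx] at hfin
  exact hfin
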